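/- A family 𝒯 of theories is representable by a normal default theory with empty objective part (i.e., by some (D, ∅) with D a set of normal defaults) if and only if there exists a set of formulas Ψ such that 𝒯 = { Cn(Φ) : Φ is a maximal consistent subset of Ψ }. -/

import Mathlib

/-- Propositional formulas over a set of atoms `α`. -/
inductive PropForm (α : Type) : Type
  | atom : α → PropForm α
  | fls  : PropForm α
  | impl : PropForm α → PropForm α → PropForm α

namespace PropForm

/-- Negation `¬φ`, definable as `φ → ⊥`. -/
def neg {α : Type} (φ : PropForm α) : PropForm α := impl φ fls

/-- Conjunction, definable from implication and falsum. -/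
def conj {α : Type} (φ ψ : PropForm α) : PropForm α := (φ.impl ψ.neg).neg

/-- Biimplication `φ ↔ ψ`. -/
def biimp {α : Type} (φ ψ : PropForm α) : PropForm α := conj (φ.impl ψ) (ψ.impl φ)

/-- Evaluation of a formula under a valuation of the atoms. -/
def eval {α : Type} (v : α → Prop) : PropForm α → Prop
  | atom a   => v a
  | fls      => False
  | impl φ ψ => eval v φ → eval v ψ

/-- Renaming/embedding of atoms. -/
def map {α β : Type} (f : α → β) : PropForm α → PropForm β
  | atom a   => atom (f a)
  | fls      => fls
  | impl φ ψ => impl (map f φ) (map f ψ)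

end PropForm

/-- Classical propositional consequence operator. -/
def Cn {α : Type} (S : Set (PropForm α)) : Set (PropForm α) :=
  {φ | ∀ v : α → Prop, (∀ ψ ∈ S, ψ.eval v) → φ.eval v}

/-- A theory: a set of formulas closed under propositional consequence. -/
def IsTheory {α : Type} (S : Set (PropForm α)) : Prop := Cn S ⊆ S

/-- A set of formulas is consistent if its consequences are not the whole language. -/
def Consistent {α : Type} (S : Set (PropForm α)) : Prop := Cn S ≠ Set.univ

/-- A default `α : Γ / β` with prerequisite, finite set of justifications, consequent. -/
structure Default (α : Type) where
  pre : PropForm α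
  jus : Finset (PropForm α)
  con : PropForm α

/-- A default is applicable w.r.t. `S` if no justification's negation follows from `S`. -/
def Default.Applicable {α : Type} (S : Set (PropForm α)) (d : Default α) : Prop :=
  ∀ γ ∈ d.jus, γ.neg ∉ Cn S

/-- The reduct of `D` w.r.t. `S`: the monotone rules `pre/con` of `S`-applicable defaults. -/
def Reduct {α : Type} (D : Set (Default α)) (S : Set (PropForm α)) :
    Set (PropForm α × PropForm α) :=
  {r | ∃ d ∈ D, d.Applicable S ∧ r = (d.pre, d.con)}

/-- `Cn^B(W)`: consequences of `W` in propositional calculus augmented with rules `B`;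
the least set containing `W`, closed under `Cn`, and closed under the rules of `B`. -/
def CnRules {α : Type} (B : Set (PropForm α × PropForm α)) (W : Set (PropForm α)) :
    Set (PropForm α) :=
  ⋂₀ {S | W ⊆ S ∧ Cn S ⊆ S ∧ ∀ r ∈ B, r.1 ∈ S → r.2 ∈ S}

/-- `S` is an extension of the default theory `(D, W)`. -/
def IsExtension {α : Type} (D : Set (Default α)) (W S : Set (PropForm α)) : Prop :=
  S = CnRules (Reduct D S) W

/-- The family of all extensions of `(D, W)`. -/
def ext {α : Type} (D : Set (Default α)) (W : Set (PropForm α)) : Set (Set (PropForm α)) :=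
  {S | IsExtension D W S}

/-- A default is prerequisite-free if its prerequisite is a tautology. -/
def Default.PrereqFree {α : Type} (d : Default α) : Prop :=
  d.pre ∈ Cn (∅ : Set (PropForm α))

/-- A default is normal if it has the form `α : {β} / β`. -/
def Default.Normal {α : Type} (d : Default α) : Prop := d.jus = {d.con}

section Aux
open PropForm
variable {α : Type}

/-- Satisfaction of a set of formulas by a valuation. -/
def Sat (v : α → Prop) (S : Set (PropForm α)) : Prop := ∀ ψ ∈ S, ψ.eval v

lemma mem_Cn {S : Set (PropForm α)} {φ : PropForm α} :
    φ ∈ Cn S ↔ ∀ v, Sat v S → φ.eval v := Iff.rfl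

lemma subset_Cn {S : Set (PropForm α)} : S ⊆ Cn S :=
  fun φ hφ v hv => hv φ hφ

lemma Cn_mono {S T : Set (PropForm α)} (h : S ⊆ T) : Cn S ⊆ Cn T :=
  fun φ hφ v hv => hφ v (fun ψ hψ => hv ψ (h hψ))

lemma Sat.cn {v : α → Prop} {S : Set (PropForm α)} (h : Sat v S) : Sat v (Cn S) :=
  fun ψ hψ => hψ v h

lemma Cn_Cn {S : Set (PropForm α)} : Cn (Cn S) = Cn S := by
  apply Set.Subset.antisymm
  · intro φ hφ v hv
    exact hφ v (Sat.cn hv)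
  · exact subset_Cn

lemma eval_neg {v : α → Prop} {φ : PropForm α} : (PropForm.neg φ).eval v ↔ ¬ φ.eval v :=
  Iff.rfl

lemma consistent_iff {S : Set (PropForm α)} : Consistent S ↔ ∃ v, Sat v S := by
  constructor
  · intro h
    by_contra hn
    push_neg at hn
    apply h
    ext φ
    simp only [Set.mem_univ, iff_true]
    intro v hv
    exact absurd hv (hn v)
  · rintro ⟨v, hv⟩ h
    have : PropForm.fls ∈ Cn S := h ▸ Set.mem_univ _
    exact this v hv

lemma neg_notMem_Cn {S : Set (PropForm α)} {φ : PropForm α} :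
    PropForm.neg φ ∉ Cn S ↔ ∃ v, Sat v S ∧ φ.eval v := by
  rw [mem_Cn]
  push_neg
  simp only [eval_neg, not_not]

/-- A tautological "top" formula. -/
def PTop : PropForm α := PropForm.neg PropForm.fls

lemma PTop_mem_Cn {S : Set (PropForm α)} : (PTop : PropForm α) ∈ Cn S :=
  fun _ _ h => h

lemma eval_conj {v : α → Prop} {φ ψ : PropForm α} :
    (PropForm.conj φ ψ).eval v ↔ φ.eval v ∧ ψ.eval v := by
  simp only [PropForm.conj, PropForm.neg, PropForm.eval]
  tauto

/-- Conjunction of a list of formulas. -/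
def conjList (l : List (PropForm α)) : PropForm α := l.foldr PropForm.conj PTop

lemma eval_conjList {v : α → Prop} {l : List (PropForm α)} :
    (conjList l).eval v ↔ ∀ φ ∈ l, φ.eval v := by
  induction l with
  | nil =>
    simp only [conjList, List.foldr, List.not_mem_nil, false_implies, implies_true, iff_true]
    exact fun h => h
  | cons a l ih =>
    simp only [conjList, List.foldr] at *
    rw [eval_conj, ih]
    simp

end Aux
section Compact
open PropForm Filter
variable {α : Type}

lemma ultra_eval {ι : Type} (U : Ultrafilter ι) (vf : ι → α → Prop) (φ : PropForm α) :
    φ.eval (fun a => {i | vf i a} ∈ U) ↔ {i | φ.eval (vf i)} ∈ U := by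
  induction φ with
  | atom a => rfl
  | fls =>
    simp only [PropForm.eval, false_iff]
    intro h
    have : ({i | False} : Set ι) = ∅ := by ext; simp
    rw [this] at h
    exact U.empty_notMem h
  | impl φ ψ ihφ ihψ =>
    simp only [PropForm.eval]
    rw [ihφ, ihψ]
    constructor
    · intro h
      by_cases hφ : {i | PropForm.eval (vf i) φ} ∈ U
      · exact U.mem_of_superset (h hφ) (fun i hi _ => hi)
      · rw [← Ultrafilter.compl_mem_iff_notMem] at hφ
        exact U.mem_of_superset hφ (fun i hi hc => absurd hc hi)
    · intro h hφ
      have := U.inter_mem h hφ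
      exact U.mem_of_superset this (fun i ⟨h1, h2⟩ => h1 h2)

/-- Compactness of propositional logic. -/
lemma compactness {Φ : Set (PropForm α)} {φ : PropForm α} (h : φ ∈ Cn Φ) :
    ∃ Φ₀ : Finset (PropForm α), ↑Φ₀ ⊆ Φ ∧ φ ∈ Cn (↑Φ₀ : Set (PropForm α)) := by
  classical
  by_contra hn
  push_neg at hn
  -- for each finite F ⊆ Φ, there is a valuation satisfying F but not φ
  have key : ∀ F : Finset Φ, ∃ v : α → Prop, (∀ ψ : Φ, ψ ∈ F → (ψ : PropForm α).eval v)
      ∧ ¬ φ.eval v := by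
    intro F
    have hsub : ↑(F.image (fun ψ : Φ => (ψ : PropForm α))) ⊆ Φ := by
      intro x hx
      simp only [Finset.coe_image, Set.mem_image, Finset.mem_coe] at hx
      obtain ⟨⟨y, hy⟩, _, rfl⟩ := hx
      exact hy
    have := hn _ hsub
    rw [mem_Cn] at this
    push_neg at this
    obtain ⟨v, hv, hnφ⟩ := this
    refine ⟨v, fun ψ hψ => ?_, hnφ⟩
    exact hv ψ (by simp only [Finset.coe_image, Set.mem_image, Finset.mem_coe]; exact ⟨ψ, hψ, rfl⟩)
  choose vf hvf1 hvf2 using key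
  haveI : Nonempty (Finset Φ) := ⟨∅⟩
  let U : Ultrafilter (Finset Φ) := Ultrafilter.of atTop
  set w : α → Prop := fun a => {F | vf F a} ∈ U with hw
  have hsatΦ : Sat w Φ := by
    intro ψ hψ
    rw [show w = (fun a => {F | vf F a} ∈ U) from rfl, ultra_eval U vf ψ]
    have : {F : Finset Φ | (⟨ψ, hψ⟩ : Φ) ∈ F} ∈ (atTop : Filter (Finset Φ)) := by
      refine mem_atTop_sets.mpr ⟨{⟨ψ, hψ⟩}, fun F hF => ?_⟩
      exact hF (Finset.mem_singleton_self _)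
    exact Filter.mem_of_superset ((Ultrafilter.of_le atTop) this : _) (fun F hF => hvf1 F ⟨ψ, hψ⟩ hF)
  have hφw : φ.eval w := h w hsatΦ
  rw [show w = (fun a => {F | vf F a} ∈ U) from rfl, ultra_eval U vf φ] at hφw
  have : {F : Finset Φ | φ.eval (vf F)} = ∅ := by
    ext F; simp only [Set.mem_setOf_eq, Set.mem_empty_iff_false, iff_false]
    exact hvf2 F
  rw [this] at hφw
  exact U.empty_notMem hφw

end Compact
section Rules
open PropForm
variable {α : Type}

lemma CnRules_subset {B : Set (PropForm α × PropForm α)} {W S : Set (PropForm α)}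
    (hW : W ⊆ S) (hCn : Cn S ⊆ S) (hB : ∀ r ∈ B, r.1 ∈ S → r.2 ∈ S) :
    CnRules B W ⊆ S :=
  Set.sInter_subset_of_mem ⟨hW, hCn, hB⟩

lemma subset_CnRules {B : Set (PropForm α × PropForm α)} {W : Set (PropForm α)} :
    W ⊆ CnRules B W :=
  fun φ hφ => Set.mem_sInter.mpr (fun _ hS => hS.1 hφ)

lemma Cn_CnRules {B : Set (PropForm α × PropForm α)} {W : Set (PropForm α)} :
    Cn (CnRules B W) ⊆ CnRules B W := fun φ hφ =>
  Set.mem_sInter.mpr (fun S hS => hS.2.1 (Cn_mono (Set.sInter_subset_of_mem hS) hφ))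

lemma CnRules_rule {B : Set (PropForm α × PropForm α)} {W : Set (PropForm α)}
    {r : PropForm α × PropForm α} (hr : r ∈ B) (h1 : r.1 ∈ CnRules B W) :
    r.2 ∈ CnRules B W :=
  Set.mem_sInter.mpr (fun S hS => hS.2.2 r hr (Set.mem_sInter.mp h1 S hS))

/-- Consequents of a list of defaults, as a set. -/
def consSet (l : List (Default α)) : Set (PropForm α) := {φ | ∃ d ∈ l, d.con = φ}

lemma consSet_nil : consSet ([] : List (Default α)) = ∅ := by
  ext; simp [consSet]

lemma consSet_cons {d : Default α} {l : List (Default α)} :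
    consSet (d :: l) = insert d.con (consSet l) := by
  ext; simp [consSet, or_comm]; tauto

lemma consSet_append {l₁ l₂ : List (Default α)} :
    consSet (l₁ ++ l₂) = consSet l₁ ∪ consSet l₂ := by
  ext φ
  constructor
  · rintro ⟨d, hd, rfl⟩
    rcases List.mem_append.mp hd with h | h
    · exact Or.inl ⟨d, h, rfl⟩
    · exact Or.inr ⟨d, h, rfl⟩
  · rintro (⟨d, hd, rfl⟩ | ⟨d, hd, rfl⟩)
    · exact ⟨d, List.mem_append.mpr (Or.inl hd), rfl⟩
    · exact ⟨d, List.mem_append.mpr (Or.inr hd), rfl⟩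

lemma sat_consSet_iff {v : α → Prop} {l : List (Default α)} :
    Sat v (consSet l) ↔ ∀ d ∈ l, d.con.eval v := by
  constructor
  · intro h d hd
    exact h d.con ⟨d, hd, rfl⟩
  · rintro h φ ⟨d, hd, rfl⟩
    exact h d hd

/-- Conjunction of consequents of a list of defaults. -/
def conjL (l : List (Default α)) : PropForm α := conjList (l.map Default.con)

lemma eval_conjL {v : α → Prop} {l : List (Default α)} :
    (conjL l).eval v ↔ ∀ d ∈ l, d.con.eval v := by
  rw [conjL, eval_conjList]
  simp

/-- Grounded chains of defaults; the head is the last default applied. -/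
inductive Chain (D : Set (Default α)) : List (Default α) → Prop
  | nil : Chain D []
  | cons {d : Default α} {l : List (Default α)} :
      d ∈ D → d.pre ∈ Cn (consSet l) → Chain D l → Chain D (d :: l)

lemma Chain.append {D : Set (Default α)} {l₁ l₂ : List (Default α)}
    (h₁ : Chain D l₁) (h₂ : Chain D l₂) : Chain D (l₁ ++ l₂) := by
  induction h₁ with
  | nil => exact h₂
  | cons hd hpre _ ih =>
    exact Chain.cons hd (Cn_mono (consSet_append ▸ Set.subset_union_left) hpre) ih

/-- The set Ψ_D of conjunctions of consequents along chains. -/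
def ChainConj (D : Set (Default α)) : Set (PropForm α) :=
  {φ | ∃ l, Chain D l ∧ φ = conjL l}

/-- Applicability of a normal default. -/
lemma normal_applicable {d : Default α} (hd : d.Normal) {S : Set (PropForm α)}
    (h : PropForm.neg d.con ∉ Cn S) : d.Applicable S := by
  intro γ hγ
  rw [hd, Finset.mem_singleton] at hγ
  subst hγ
  exact h

/-- Key sublemma: consequents along a chain belong to any rule-closed, Cn-closed set. -/
lemma chain_consSet_subset {D : Set (Default α)} (hD : ∀ d ∈ D, d.Normal)
    {S T : Set (PropForm α)} (hTcn : Cn T ⊆ T)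
    (hTrule : ∀ r ∈ Reduct D S, r.1 ∈ T → r.2 ∈ T)
    {l : List (Default α)} (hl : Chain D l)
    (happ : ∀ e ∈ l, PropForm.neg e.con ∉ Cn S) : consSet l ⊆ T := by
  induction hl with
  | nil => rw [consSet_nil]; exact Set.empty_subset _
  | @cons d l hd hpre hch ih =>
    have ihl : consSet l ⊆ T := ih (fun e he => happ e (List.mem_cons_of_mem d he))
    have hpre' : d.pre ∈ T := hTcn (Cn_mono ihl hpre)
    have hcon : d.con ∈ T :=
      hTrule (d.pre, d.con) ⟨d, hd, normal_applicable (hD d hd) (happ d (List.mem_cons_self)),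
        rfl⟩ hpre'
    rw [consSet_cons]
    exact Set.insert_subset hcon ihl

/-- Concatenating chains for a finite subset of ChainConj. -/
lemma finset_chain {D : Set (Default α)} {Φ₀ : Finset (PropForm α)}
    (h : ↑Φ₀ ⊆ ChainConj D) :
    ∃ L, Chain D L ∧ (∀ φ ∈ Φ₀, φ ∈ Cn (consSet L)) ∧
      (∀ v : α → Prop, (∀ φ ∈ Φ₀, φ.eval v) → Sat v (consSet L)) := by
  classical
  induction Φ₀ using Finset.induction with
  | empty => exact ⟨[], Chain.nil, by simp, by intro v _; rw [consSet_nil]; intro ψ h; cases h⟩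
  | @insert φ Φ₀ hφ ih =>
    have hΦ₀ : ↑Φ₀ ⊆ ChainConj D := fun x hx => h (by simp [hx])
    obtain ⟨L, hL, hmem, hsat⟩ := ih hΦ₀
    have hφΨ : φ ∈ ChainConj D := h (by simp)
    obtain ⟨l, hl, hφeq⟩ := hφΨ
    refine ⟨l ++ L, hl.append hL, ?_, ?_⟩
    · intro ψ hψ
      rw [Finset.mem_insert] at hψ
      rcases hψ with rfl | hψ
      · intro v hv
        rw [consSet_append] at hv
        rw [hφeq, eval_conjL]
        intro d hd
        exact hv d.con (Set.mem_union_left _ ⟨d, hd, rfl⟩)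
      · intro v hv
        rw [consSet_append] at hv
        exact hmem ψ hψ v (fun χ hχ => hv χ (Set.mem_union_right _ hχ))
    · intro v hv
      rw [consSet_append]
      have h1 : Sat v (consSet l) := by
        have hev : φ.eval v := hv φ (Finset.mem_insert_self _ _)
        rw [hφeq, eval_conjL] at hev
        rw [sat_consSet_iff]
        exact hev
      have h2 : Sat v (consSet L) := hsat v (fun χ hχ => hv χ (Finset.mem_insert_of_mem hχ))
      intro ψ hψ
      rcases hψ with hψ | hψ
      · exact h1 ψ hψ
      · exact h2 ψ hψ
end Rules
section MainLemmas
open PropForm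
variable {α : Type}

lemma consistent_mono {S T : Set (PropForm α)} (h : S ⊆ T) (hT : Consistent T) :
    Consistent S := by
  rw [consistent_iff] at *
  obtain ⟨v, hv⟩ := hT
  exact ⟨v, fun ψ hψ => hv ψ (h hψ)⟩

lemma conjL_mem_Cn_consSet {l : List (Default α)} : conjL l ∈ Cn (consSet l) :=
  fun _ hv => eval_conjL.mpr (sat_consSet_iff.mp hv)

lemma ext_cn_closed {D : Set (Default α)} {W S : Set (PropForm α)}
    (hS : IsExtension D W S) : Cn S ⊆ S := by
  rw [IsExtension] at hS
  nth_rewrite 2 [hS]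
  nth_rewrite 1 [hS]
  exact Cn_CnRules

lemma ext_rule {D : Set (Default α)} {W S : Set (PropForm α)}
    (hS : IsExtension D W S) : ∀ r ∈ Reduct D S, r.1 ∈ S → r.2 ∈ S := by
  intro r hr h1
  rw [IsExtension] at hS
  rw [hS] at h1 ⊢
  exact CnRules_rule hr h1

lemma ext_W_sub {D : Set (Default α)} {W S : Set (PropForm α)}
    (hS : IsExtension D W S) : W ⊆ S := by
  rw [IsExtension] at hS
  rw [hS]
  exact subset_CnRules

lemma consistent_empty : Consistent (∅ : Set (PropForm α)) :=
  consistent_iff.mpr ⟨fun _ => True, fun ψ h => absurd h (Set.notMem_empty ψ)⟩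

lemma ext_consistent {D : Set (Default α)} (hD : ∀ d ∈ D, d.Normal)
    {S : Set (PropForm α)} (hS : IsExtension D (∅ : Set (PropForm α)) S) :
    Consistent S := by
  by_contra h
  rw [Consistent, not_not] at h
  have hred : Reduct D S = ∅ := by
    ext r
    simp only [Set.mem_empty_iff_false, iff_false]
    rintro ⟨d, hdD, happ, rfl⟩
    exact happ d.con (by rw [hD d hdD]; exact Finset.mem_singleton_self _)
      (h ▸ Set.mem_univ _)
  have hsub : S ⊆ Cn (∅ : Set (PropForm α)) := by
    rw [IsExtension, hred] at hS
    rw [hS]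
    exact CnRules_subset subset_Cn (Cn_Cn.subset)
      (fun r hr => absurd hr (Set.notMem_empty r))
  have : Cn (∅ : Set (PropForm α)) = Set.univ := by
    apply Set.eq_univ_of_univ_subset
    calc Set.univ = Cn S := h.symm
    _ ⊆ Cn (Cn (∅ : Set (PropForm α))) := Cn_mono hsub
    _ = Cn ∅ := Cn_Cn
  exact consistent_empty this

/-- Part A: every maximal consistent subset of `ChainConj D` yields an extension. -/
lemma partA {D : Set (Default α)} (hD : ∀ d ∈ D, d.Normal) {Φ : Set (PropForm α)}
    (hΦΨ : Φ ⊆ ChainConj D) (hcons : Consistent Φ)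
    (hmax : ∀ Φ', Φ ⊆ Φ' → Φ' ⊆ ChainConj D → Consistent Φ' → Φ' = Φ) :
    IsExtension D (∅ : Set (PropForm α)) (Cn Φ) := by
  obtain ⟨v₀, hv₀⟩ := consistent_iff.mp hcons
  have hCnCn : Cn (Cn Φ) = Cn Φ := Cn_Cn
  apply Set.Subset.antisymm
  · -- Cn Φ ⊆ CnRules (Reduct D (Cn Φ)) ∅
    have hΦR : Φ ⊆ CnRules (Reduct D (Cn Φ)) (∅ : Set (PropForm α)) := by
      intro φ hφ
      obtain ⟨l, hl, rfl⟩ := hΦΨ hφ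
      have happ : ∀ e ∈ l, PropForm.neg e.con ∉ Cn (Cn Φ) := by
        intro e he
        rw [hCnCn, neg_notMem_Cn]
        refine ⟨v₀, hv₀, ?_⟩
        have := hv₀ _ hφ
        rw [eval_conjL] at this
        exact this e he
      have hsub : consSet l ⊆ CnRules (Reduct D (Cn Φ)) (∅ : Set (PropForm α)) :=
        chain_consSet_subset hD Cn_CnRules (fun r hr => CnRules_rule hr) hl happ
      exact Cn_CnRules (Cn_mono hsub conjL_mem_Cn_consSet)
    exact fun φ hφ => Cn_CnRules (Cn_mono hΦR hφ)
  · -- CnRules (Reduct D (Cn Φ)) ∅ ⊆ Cn Φ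
    apply CnRules_subset (Set.empty_subset _) Cn_Cn.subset
    rintro r ⟨d, hdD, hdapp, rfl⟩ hp
    -- hp : d.pre ∈ Cn Φ, goal : d.con ∈ Cn Φ
    obtain ⟨Φ₀, hΦ₀Φ, hpre₀⟩ := compactness hp
    obtain ⟨L, hL, hmem, hsat⟩ := finset_chain (hΦ₀Φ.trans hΦΨ)
    have hchain : Chain D (d :: L) := by
      refine Chain.cons hdD ?_ hL
      intro v hv
      exact hpre₀ v (fun ψ hψ => hmem ψ (Finset.mem_coe.mp hψ) v hv)
    have hnc : PropForm.neg d.con ∉ Cn Φ := by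
      have := hdapp d.con (by rw [hD d hdD]; exact Finset.mem_singleton_self _)
      rwa [hCnCn] at this
    rw [neg_notMem_Cn] at hnc
    obtain ⟨v, hvΦ, hvc⟩ := hnc
    have hevalc' : (conjL (d :: L)).eval v := by
      rw [eval_conjL]
      intro e he
      rcases List.mem_cons.mp he with rfl | he
      · exact hvc
      · exact sat_consSet_iff.mp (hsat v (fun φ hφ => hvΦ φ (hΦ₀Φ hφ))) e he
    have hcons' : Consistent (insert (conjL (d :: L)) Φ) := by
      refine consistent_iff.mpr ⟨v, ?_⟩
      rintro ψ (rfl | hψ)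
      · exact hevalc'
      · exact hvΦ ψ hψ
    have heq := hmax (insert (conjL (d :: L)) Φ) (Set.subset_insert _ _)
      (Set.insert_subset ⟨_, hchain, rfl⟩ hΦΨ) hcons'
    have hc'Φ : conjL (d :: L) ∈ Φ := heq ▸ Set.mem_insert _ _
    intro v' hv'
    have := hv' _ hc'Φ
    rw [eval_conjL] at this
    exact this d (List.mem_cons_self)

/-- Part B: every extension of a normal default theory with empty objective part
arises from a maximal consistent subset of `ChainConj D`. -/
lemma partB {D : Set (Default α)} (hD : ∀ d ∈ D, d.Normal) {S : Set (PropForm α)}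
    (hS : IsExtension D (∅ : Set (PropForm α)) S) :
    ∃ Φ, Φ ⊆ ChainConj D ∧ Consistent Φ ∧
      (∀ Φ', Φ ⊆ Φ' → Φ' ⊆ ChainConj D → Consistent Φ' → Φ' = Φ) ∧ S = Cn Φ := by
  have hScn : Cn S ⊆ S := ext_cn_closed hS
  have hSrule := ext_rule hS
  have hScons : Consistent S := ext_consistent hD hS
  have hSeq : S = Cn (ChainConj D ∩ S) := by
    apply Set.Subset.antisymm
    · rw [IsExtension] at hS
      nth_rewrite 1 [hS]
      apply CnRules_subset (Set.empty_subset _) (Cn_Cn.subset)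
      rintro r ⟨d, hdD, hdapp, rfl⟩ h1
      -- h1 : d.pre ∈ Cn (ChainConj D ∩ S), goal : d.con ∈ Cn (ChainConj D ∩ S)
      obtain ⟨Φ₀, hΦ₀Φ, hpre₀⟩ := compactness h1
      obtain ⟨L, hL, hmem, hsat⟩ :=
        finset_chain (hΦ₀Φ.trans Set.inter_subset_left)
      have hchain : Chain D (d :: L) := by
        refine Chain.cons hdD ?_ hL
        intro v hv
        exact hpre₀ v (fun ψ hψ => hmem ψ (Finset.mem_coe.mp hψ) v hv)
      have hconsLS : consSet L ⊆ S := by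
        intro ψ hψ
        apply hScn
        intro v hv
        have hvΦ₀ : ∀ φ ∈ Φ₀, φ.eval v := by
          intro φ hφ
          exact hv φ (Set.inter_subset_right (hΦ₀Φ hφ))
        exact hsat v hvΦ₀ ψ hψ
      have hdconS : d.con ∈ S := by
        refine hSrule (d.pre, d.con) ⟨d, hdD, hdapp, rfl⟩ ?_
        exact hScn (Cn_mono (fun φ hφ => Set.inter_subset_right (hΦ₀Φ hφ) : ↑Φ₀ ⊆ S) hpre₀)
      have hc'S : conjL (d :: L) ∈ S := by
        apply hScn
        refine Cn_mono ?_ conjL_mem_Cn_consSet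
        rw [consSet_cons]
        exact Set.insert_subset hdconS hconsLS
      have hc'Φ : conjL (d :: L) ∈ ChainConj D ∩ S := ⟨⟨_, hchain, rfl⟩, hc'S⟩
      intro v' hv'
      have := hv' _ hc'Φ
      rw [eval_conjL] at this
      exact this d (List.mem_cons_self)
    · exact fun φ hφ => hScn (Cn_mono Set.inter_subset_right hφ)
  refine ⟨ChainConj D ∩ S, Set.inter_subset_left,
    consistent_mono Set.inter_subset_right hScons, ?_, hSeq⟩
  -- maximality
  intro Φ' hΦΦ' hΦ'Ψ hΦ'cons
  refine Set.Subset.antisymm ?_ hΦΦ'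
  intro c hc
  obtain ⟨v₁, hv₁⟩ := consistent_iff.mp hΦ'cons
  obtain ⟨l, hl, rfl⟩ := hΦ'Ψ hc
  have hsatS : Sat v₁ S := by
    rw [hSeq]
    exact Sat.cn (fun ψ hψ => hv₁ ψ (hΦΦ' hψ))
  have happ : ∀ e ∈ l, PropForm.neg e.con ∉ Cn S := by
    intro e he hneg
    exact hneg v₁ hsatS (by
      have := hv₁ _ hc
      rw [eval_conjL] at this
      exact this e he)
  have hsub := chain_consSet_subset hD hScn hSrule hl happ
  exact ⟨⟨l, hl, rfl⟩, hScn (Cn_mono hsub conjL_mem_Cn_consSet)⟩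

end MainLemmas
section Converse
open PropForm
variable {α : Type}

/-- The prerequisite-free normal default with consequent ψ. -/
def freeDefault (ψ : PropForm α) : Default α := ⟨PTop, {ψ}, ψ⟩

lemma freeDefaults_normal {Ψ : Set (PropForm α)} :
    ∀ d ∈ freeDefault '' Ψ, d.Normal := by
  rintro d ⟨ψ, hψ, rfl⟩
  rfl

lemma extRight {Ψ Φ : Set (PropForm α)} (hΦΨ : Φ ⊆ Ψ) (hcons : Consistent Φ)
    (hmax : ∀ Φ', Φ ⊆ Φ' → Φ' ⊆ Ψ → Consistent Φ' → Φ' = Φ) :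
    IsExtension (freeDefault '' Ψ) (∅ : Set (PropForm α)) (Cn Φ) := by
  obtain ⟨v₀, hv₀⟩ := consistent_iff.mp hcons
  have hCnCn : Cn (Cn Φ) = Cn Φ := Cn_Cn
  apply Set.Subset.antisymm
  · have hΦR : Φ ⊆ CnRules (Reduct (freeDefault '' Ψ) (Cn Φ)) (∅ : Set (PropForm α)) := by
      intro ψ hψ
      have happ : (freeDefault ψ).Applicable (Cn Φ) := by
        intro γ hγ
        rw [freeDefault, Finset.mem_singleton] at hγ
        rw [hγ, hCnCn, neg_notMem_Cn]
        exact ⟨v₀, hv₀, hv₀ ψ hψ⟩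
      have hr : ((PTop : PropForm α), ψ) ∈ Reduct (freeDefault '' Ψ) (Cn Φ) :=
        ⟨freeDefault ψ, ⟨ψ, hΦΨ hψ, rfl⟩, happ, rfl⟩
      exact CnRules_rule hr (Cn_CnRules PTop_mem_Cn)
    exact fun φ hφ => Cn_CnRules (Cn_mono hΦR hφ)
  · apply CnRules_subset (Set.empty_subset _) Cn_Cn.subset
    rintro r ⟨d, ⟨ψ, hψΨ, rfl⟩, happ, rfl⟩ _
    have hnc : PropForm.neg ψ ∉ Cn Φ := by
      have := happ ψ (Finset.mem_singleton_self ψ)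
      rwa [hCnCn] at this
    rw [neg_notMem_Cn] at hnc
    obtain ⟨v, hvΦ, hvψ⟩ := hnc
    have hcons' : Consistent (insert ψ Φ) := by
      refine consistent_iff.mpr ⟨v, ?_⟩
      rintro χ (rfl | hχ)
      · exact hvψ
      · exact hvΦ χ hχ
    have heq := hmax (insert ψ Φ) (Set.subset_insert _ _)
      (Set.insert_subset hψΨ hΦΨ) hcons'
    exact subset_Cn (heq ▸ Set.mem_insert _ _)

lemma extLeft {Ψ : Set (PropForm α)} {S : Set (PropForm α)}
    (hS : IsExtension (freeDefault '' Ψ) (∅ : Set (PropForm α)) S) :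
    ∃ Φ, Φ ⊆ Ψ ∧ Consistent Φ ∧
      (∀ Φ', Φ ⊆ Φ' → Φ' ⊆ Ψ → Consistent Φ' → Φ' = Φ) ∧ S = Cn Φ := by
  have hScn : Cn S ⊆ S := ext_cn_closed hS
  have hSrule := ext_rule hS
  have hScons : Consistent S := ext_consistent freeDefaults_normal hS
  have hPTopS : (PTop : PropForm α) ∈ S := hScn PTop_mem_Cn
  have hSeq : S = Cn (Ψ ∩ S) := by
    apply Set.Subset.antisymm
    · rw [IsExtension] at hS
      nth_rewrite 1 [hS]
      apply CnRules_subset (Set.empty_subset _) Cn_Cn.subset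
      rintro r ⟨d, ⟨ψ, hψΨ, rfl⟩, happ, rfl⟩ _
      have hψS : ψ ∈ S :=
        hSrule ((PTop : PropForm α), ψ) ⟨freeDefault ψ, ⟨ψ, hψΨ, rfl⟩, happ, rfl⟩ hPTopS
      exact subset_Cn ⟨hψΨ, hψS⟩
    · exact fun φ hφ => hScn (Cn_mono Set.inter_subset_right hφ)
  refine ⟨Ψ ∩ S, Set.inter_subset_left,
    consistent_mono Set.inter_subset_right hScons, ?_, hSeq⟩
  intro Φ' hΦΦ' hΦ'Ψ hΦ'cons
  refine Set.Subset.antisymm ?_ hΦΦ'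
  intro ψ hψ
  obtain ⟨v₁, hv₁⟩ := consistent_iff.mp hΦ'cons
  have hsatS : Sat v₁ S := by
    rw [hSeq]
    exact Sat.cn (fun χ hχ => hv₁ χ (hΦΦ' hχ))
  have happ : (freeDefault ψ).Applicable S := by
    intro γ hγ
    rw [freeDefault, Finset.mem_singleton] at hγ
    rw [hγ]
    intro hneg
    exact hneg v₁ hsatS (hv₁ ψ hψ)
  have hψS : ψ ∈ S :=
    hSrule ((PTop : PropForm α), ψ) ⟨freeDefault ψ, ⟨ψ, hΦ'Ψ hψ, rfl⟩, happ, rfl⟩ hPTopS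
  exact ⟨hΦ'Ψ hψ, hψS⟩

end Converse

/-- characterization of families representable by normal default theories
with empty objective part. -/
theorem representable_by_normal_empty_objective_iff {α : Type} [Denumerable α]
    (𝒯 : Set (Set (PropForm α))) :
    (∃ D : Set (Default α), (∀ d ∈ D, d.Normal) ∧ ext D (∅ : Set (PropForm α)) = 𝒯) ↔
      ∃ Ψ : Set (PropForm α),
        𝒯 = {T | ∃ Φ ⊆ Ψ, Consistent Φ ∧
          (∀ Φ', Φ ⊆ Φ' → Φ' ⊆ Ψ → Consistent Φ' → Φ' = Φ) ∧
          T = Cn Φ} := by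
  constructor
  · rintro ⟨D, hD, rfl⟩
    refine ⟨ChainConj D, ?_⟩
    ext T
    constructor
    · intro hT
      exact partB hD hT
    · rintro ⟨Φ, h1, h2, h3, rfl⟩
      exact partA hD h1 h2 h3
  · rintro ⟨Ψ, rfl⟩
    refine ⟨freeDefault '' Ψ, freeDefaults_normal, ?_⟩
    ext S
    constructor
    · intro hS
      exact extLeft hS
    · rintro ⟨Φ, h1, h2, h3, rfl⟩
      exact extRight h1 h2 h3
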